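/- Under the stated assumptions, and assuming in addition that both block components W^{+−} : H₋⁻ → H₊⁺ and W^{−+} : H₋⁺ → H₊⁻ are compact, the operator Q := (id_X − ϱ₋⁻¹ π₋⁺ ϱ₋) ∘ P₋⁻¹ : Y → X satisfies: (i) P ∘ Q = id_Y on Y, and (ii) the composition ϱ ∘ Q : Y → H₋⁺ ⊕ H₊⁻ is a compact operator. -/

import Mathlib

/-- A bounded linear operator between Banach spaces is *Fredholm* if its kernel is
finite-dimensional and its range is closed and of finite codimension. -/
def IsFredholm {E F : Type*} [NormedAddCommGroup E] [NormedSpace ℂ E]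
    [NormedAddCommGroup F] [NormedSpace ℂ F] (T : E →L[ℂ] F) : Prop :=
  FiniteDimensional ℂ (LinearMap.ker T.toLinearMap) ∧ IsClosed (LinearMap.range T.toLinearMap : Set F) ∧
    FiniteDimensional ℂ (F ⧸ LinearMap.range T.toLinearMap)

/-- The index of a (Fredholm) operator: `dim ker T - codim ran T`. -/
noncomputable def fredholmIndex {E F : Type*} [NormedAddCommGroup E] [NormedSpace ℂ E]
    [NormedAddCommGroup F] [NormedSpace ℂ F] (T : E →L[ℂ] F) : ℤ :=
  (Module.finrank ℂ (LinearMap.ker T.toLinearMap) : ℤ) - (Module.finrank ℂ (F ⧸ LinearMap.range T.toLinearMap) : ℤ)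

/-- Two bounded operators *have equal index* if either both are Fredholm with the same
index, or neither is Fredholm. -/
def EqualIndex {E F E' F' : Type*} [NormedAddCommGroup E] [NormedSpace ℂ E]
    [NormedAddCommGroup F] [NormedSpace ℂ F] [NormedAddCommGroup E'] [NormedSpace ℂ E']
    [NormedAddCommGroup F'] [NormedSpace ℂ F'] (T : E →L[ℂ] F) (S : E' →L[ℂ] F') : Prop :=
  (IsFredholm T ∧ IsFredholm S ∧ fredholmIndex T = fredholmIndex S) ∨
    (¬ IsFredholm T ∧ ¬ IsFredholm S)

/-- The block component `π ∘ W |_q : q → ran π` of a bounded operator `W : H₋ → H₊`. -/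
noncomputable def blockComponent {Hm Hp : Type*}
    [NormedAddCommGroup Hm] [NormedSpace ℂ Hm] [NormedAddCommGroup Hp] [NormedSpace ℂ Hp]
    (π : Hp →L[ℂ] Hp) (W : Hm →L[ℂ] Hp) (q : Submodule ℂ Hm) :
    q →L[ℂ] LinearMap.range π.toLinearMap :=
  ContinuousLinearMap.codRestrict ((π.comp W).comp (Submodule.subtypeL q))
    (LinearMap.range π.toLinearMap) (fun x => LinearMap.mem_range_self π.toLinearMap (W x))

/-- The operator `W := ϱ₊ ∘ ϱ₋⁻¹ : H₋ → H₊`, where `ϱ₋⁻¹ : H₋ → ker P ⊆ X` is the inverse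
of the isomorphism `rm = ϱ₋|_{ker P} : ker P ≃ H₋`. -/
noncomputable def Wop {X Y Hp Hm : Type*}
    [NormedAddCommGroup X] [NormedSpace ℂ X] [NormedAddCommGroup Y] [NormedSpace ℂ Y]
    [NormedAddCommGroup Hp] [NormedSpace ℂ Hp] [NormedAddCommGroup Hm] [NormedSpace ℂ Hm]
    (P : X →L[ℂ] Y) (ϱp : X →L[ℂ] Hp) (rm : (LinearMap.ker P.toLinearMap) ≃L[ℂ] Hm) :
    Hm →L[ℂ] Hp :=
  (ϱp.comp (Submodule.subtypeL (LinearMap.ker P.toLinearMap))).comp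
    (rm.symm : Hm →L[ℂ] LinearMap.ker P.toLinearMap)

/-- The operator `ϱ := (π₋⁺ϱ₋) ⊕ (π₊⁻ϱ₊) : X → H₋⁺ ⊕ H₊⁻`. -/
noncomputable def rhoOp {X Hp Hm : Type*}
    [NormedAddCommGroup X] [NormedSpace ℂ X]
    [NormedAddCommGroup Hp] [NormedSpace ℂ Hp] [NormedAddCommGroup Hm] [NormedSpace ℂ Hm]
    (ϱm : X →L[ℂ] Hm) (ϱp : X →L[ℂ] Hp) (πmp : Hm →L[ℂ] Hm) (πpm : Hp →L[ℂ] Hp) :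
    X →L[ℂ] (LinearMap.range πmp.toLinearMap × LinearMap.range πpm.toLinearMap) :=
  (ContinuousLinearMap.codRestrict (πmp.comp ϱm) (LinearMap.range πmp.toLinearMap)
      (fun x => LinearMap.mem_range_self πmp.toLinearMap (ϱm x))).prod
    (ContinuousLinearMap.codRestrict (πpm.comp ϱp) (LinearMap.range πpm.toLinearMap)
      (fun x => LinearMap.mem_range_self πpm.toLinearMap (ϱp x)))


/-- The operator `P₋⁻¹ := (ϱ₊ ⊕ P)⁻¹ ∘ (0 ⊕ id_Y) : Y → X`, where `ep` witnesses the
bounded invertibility of `ϱ₊ ⊕ P : X → H₊ ⊕ Y`. -/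
noncomputable def Pminus {X Y Hp : Type*}
    [NormedAddCommGroup X] [NormedSpace ℂ X] [NormedAddCommGroup Y] [NormedSpace ℂ Y]
    [NormedAddCommGroup Hp] [NormedSpace ℂ Hp]
    (ep : X ≃L[ℂ] Hp × Y) : Y →L[ℂ] X :=
  (ep.symm : Hp × Y →L[ℂ] X).comp ((0 : Y →L[ℂ] Hp).prod (ContinuousLinearMap.id ℂ Y))

/-- The operator `ϱ₋⁻¹ : H₋ → ker P ⊆ X`, viewed as a map into `X`. -/
noncomputable def rhoMinusInv {X Y Hm : Type*}
    [NormedAddCommGroup X] [NormedSpace ℂ X] [NormedAddCommGroup Y] [NormedSpace ℂ Y]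
    [NormedAddCommGroup Hm] [NormedSpace ℂ Hm]
    (P : X →L[ℂ] Y) (rm : (LinearMap.ker P.toLinearMap) ≃L[ℂ] Hm) : Hm →L[ℂ] X :=
  (Submodule.subtypeL (LinearMap.ker P.toLinearMap)).comp (rm.symm : Hm →L[ℂ] LinearMap.ker P.toLinearMap)

/-- The operator `Q := (id_X − ϱ₋⁻¹ π₋⁺ ϱ₋) ∘ P₋⁻¹ : Y → X`. -/
noncomputable def Qop {X Y Hp Hm : Type*}
    [NormedAddCommGroup X] [NormedSpace ℂ X] [NormedAddCommGroup Y] [NormedSpace ℂ Y]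
    [NormedAddCommGroup Hp] [NormedSpace ℂ Hp] [NormedAddCommGroup Hm] [NormedSpace ℂ Hm]
    (P : X →L[ℂ] Y) (ϱm : X →L[ℂ] Hm) (πmp : Hm →L[ℂ] Hm)
    (rm : (LinearMap.ker P.toLinearMap) ≃L[ℂ] Hm) (ep : X ≃L[ℂ] Hp × Y) : Y →L[ℂ] X :=
  (ContinuousLinearMap.id ℂ X - (rhoMinusInv P rm).comp (πmp.comp ϱm)).comp (Pminus ep)

set_option maxHeartbeats 1000000 in
/-- If both block components `W⁺⁻ : H₋⁻ → H₊⁺` and `W⁻⁺ : H₋⁺ → H₊⁻` are compact, then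
`Q := (id_X − ϱ₋⁻¹ π₋⁺ ϱ₋) ∘ P₋⁻¹` satisfies `P ∘ Q = id_Y` and `ϱ ∘ Q : Y → H₋⁺ ⊕ H₊⁻`
is a compact operator. -/
theorem statement6
    {X Y Hp Hm : Type*}
    [NormedAddCommGroup X] [InnerProductSpace ℂ X] [CompleteSpace X]
    [NormedAddCommGroup Y] [NormedSpace ℂ Y] [CompleteSpace Y]
    [NormedAddCommGroup Hp] [NormedSpace ℂ Hp] [CompleteSpace Hp]
    [NormedAddCommGroup Hm] [NormedSpace ℂ Hm] [CompleteSpace Hm]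
    (πpp πpm : Hp →L[ℂ] Hp) (πmp πmm : Hm →L[ℂ] Hm)
    (hπpp : πpp.comp πpp = πpp) (hπpm : πpm.comp πpm = πpm)
    (hπp : πpp + πpm = ContinuousLinearMap.id ℂ Hp)
    (hπmp : πmp.comp πmp = πmp) (hπmm : πmm.comp πmm = πmm)
    (hπm : πmp + πmm = ContinuousLinearMap.id ℂ Hm)
    (P : X →L[ℂ] Y) (ϱp : X →L[ℂ] Hp) (ϱm : X →L[ℂ] Hm)
    (ep : X ≃L[ℂ] Hp × Y) (hep : ∀ u : X, ep u = (ϱp u, P u))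
    (em : X ≃L[ℂ] Hm × Y) (hem : ∀ u : X, em u = (ϱm u, P u))
    (rm : (LinearMap.ker P.toLinearMap) ≃L[ℂ] Hm)
    (hrm : ∀ u : LinearMap.ker P.toLinearMap, rm u = ϱm u)
    (hcompactPM :
      IsCompactOperator ⇑(blockComponent πpp (Wop P ϱp rm) (LinearMap.range πmm.toLinearMap)))
    (hcompactMP :
      IsCompactOperator ⇑(blockComponent πpm (Wop P ϱp rm) (LinearMap.range πmp.toLinearMap))) :
    P.comp (Qop P ϱm πmp rm ep) = ContinuousLinearMap.id ℂ Y ∧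
    IsCompactOperator ⇑((rhoOp ϱm ϱp πmp πpm).comp (Qop P ϱm πmp rm ep)) := by
  have hepv : ∀ f : Y, ϱp (Pminus ep f) = 0 ∧ P (Pminus ep f) = f := by
    intro f
    have h := hep (ep.symm ((0 : Hp), f))
    rw [ep.apply_symm_apply] at h
    have h1 := congrArg Prod.fst h
    have h2 := congrArg Prod.snd h
    simp only [Pminus, ContinuousLinearMap.comp_apply, ContinuousLinearMap.prod_apply,
      ContinuousLinearMap.zero_apply, ContinuousLinearMap.id_apply,
      ContinuousLinearEquiv.coe_coe] at *
    exact ⟨h1.symm, h2.symm⟩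
  have hPr : ∀ h : Hm, P (rhoMinusInv P rm h) = 0 := fun h => (rm.symm h).2
  have hϱmr : ∀ h : Hm, ϱm (rhoMinusInv P rm h) = h := by
    intro h
    have := hrm (rm.symm h)
    rw [rm.apply_symm_apply] at this
    simpa [rhoMinusInv] using this.symm
  have hmp : ∀ x, πmp (πmp x) = πmp x := fun x => congrArg (fun T => T x) hπmp
  constructor
  · ext f
    simp [Qop, hPr, (hepv f).2]
  · set A : Y →L[ℂ] LinearMap.range πmp.toLinearMap :=
      ContinuousLinearMap.codRestrict ((πmp.comp ϱm).comp (Pminus ep))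
        (LinearMap.range πmp.toLinearMap) (fun f => LinearMap.mem_range_self πmp.toLinearMap _) with hA
    have key : (rhoOp ϱm ϱp πmp πpm).comp (Qop P ϱm πmp rm ep)
        = (ContinuousLinearMap.inr ℂ (LinearMap.range πmp.toLinearMap) (LinearMap.range πpm.toLinearMap)).comp
            (-((blockComponent πpm (Wop P ϱp rm) (LinearMap.range πmp.toLinearMap)).comp A)) := by
      ext f
      · simp [rhoOp, Qop, hA, ContinuousLinearMap.coe_codRestrict_apply, Prod.fst_sub, hϱmr, hmp]
        erw [ContinuousLinearMap.coe_codRestrict_apply, ContinuousLinearMap.coe_codRestrict_apply]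
        simp [hϱmr, hmp]
      · simp [rhoOp, Qop, blockComponent, Wop, rhoMinusInv, hA, ContinuousLinearMap.coe_codRestrict_apply, Prod.snd_sub,
          (hepv f).1]
        erw [ContinuousLinearMap.coe_codRestrict_apply, ContinuousLinearMap.coe_codRestrict_apply]
        simp [(hepv f).1]
        rfl
    rw [key]
    have h1 : IsCompactOperator
        ⇑(-((blockComponent πpm (Wop P ϱp rm) (LinearMap.range πmp.toLinearMap)).comp A)) := by
      have h0 := (hcompactMP.comp_clm A).neg
      have : ⇑(-((blockComponent πpm (Wop P ϱp rm) (LinearMap.range πmp.toLinearMap)).comp A))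
          = -(⇑(blockComponent πpm (Wop P ϱp rm) (LinearMap.range πmp.toLinearMap)) ∘ ⇑A) := by
        ext y; simp
      rw [this]; exact h0
    have h2 := h1.clm_comp
      (ContinuousLinearMap.inr ℂ (LinearMap.range πmp.toLinearMap) (LinearMap.range πpm.toLinearMap))
    have h3 : ⇑((ContinuousLinearMap.inr ℂ (LinearMap.range πmp.toLinearMap)
          (LinearMap.range πpm.toLinearMap)).comp
        (-((blockComponent πpm (Wop P ϱp rm) (LinearMap.range πmp.toLinearMap)).comp A)))
        = ⇑(ContinuousLinearMap.inr ℂ (LinearMap.range πmp.toLinearMap) (LinearMap.range πpm.toLinearMap)) ∘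
          ⇑(-((blockComponent πpm (Wop P ϱp rm) (LinearMap.range πmp.toLinearMap)).comp A)) :=
      ContinuousLinearMap.coe_comp' _ _
    rw [h3]; exact h2
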